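/- Let A be a set of n ≥ 3 positive real numbers with |A+A| ≤ 3n−4 and |AA| < n(n+1)/2. Assume (Freiman's (3n−4)-theorem) that A is contained in an arithmetic progression {a, a+d, ..., a+(2n−4)d} with d > 0. Then there exist integers 0 ≤ i < k ≤ ℓ < j ≤ 2n−4 with a/d = (ij − kℓ)/(k + ℓ − i − j); in particular some dilation of A is a subset of (ij−kℓ)/(k+ℓ−i−j) + {0,1,...,2n−4}. -/

import Mathlib

open Finset Pointwise

lemma card_le_pairs (A : Finset ℝ) :
    ((A ×ˢ A).filter fun p => p.1 ≤ p.2).card = A.card * (A.card + 1) / 2 := by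
  set S₁ := (A ×ˢ A).filter fun p => p.1 ≤ p.2 with hS₁
  set S₂ := (A ×ˢ A).filter fun p => p.2 ≤ p.1 with hS₂
  have hswap : S₂ = S₁.image Prod.swap := by
    ext ⟨x, y⟩
    simp [hS₁, hS₂, Finset.mem_image, Finset.mem_filter, Finset.mem_product, Prod.ext_iff]
    intro _; exact and_comm
  have hcard2 : S₂.card = S₁.card := by
    rw [hswap]; exact Finset.card_image_of_injective _ Prod.swap_injective
  have hunion : S₁ ∪ S₂ = A ×ˢ A := by
    apply Finset.Subset.antisymm
    · exact Finset.union_subset (Finset.filter_subset _ _) (Finset.filter_subset _ _)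
    · intro p hp
      rcases le_total p.1 p.2 with h | h
      · exact Finset.mem_union_left _ (Finset.mem_filter.2 ⟨hp, h⟩)
      · exact Finset.mem_union_right _ (Finset.mem_filter.2 ⟨hp, h⟩)
  have hinter : S₁ ∩ S₂ = A.diag := by
    ext ⟨x, y⟩
    simp [hS₁, hS₂, Finset.mem_filter, Finset.mem_product, Finset.mem_diag]
    constructor
    · rintro ⟨⟨⟨hx, hy⟩, h1⟩, ⟨_, h2⟩⟩; exact ⟨hx, le_antisymm h1 h2⟩
    · rintro ⟨hx, rfl⟩; exact ⟨⟨⟨hx, hx⟩, le_refl _⟩, ⟨⟨hx, hx⟩, le_refl _⟩⟩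
  have h := Finset.card_union_add_card_inter S₁ S₂
  rw [hunion, hinter, Finset.card_product, Finset.diag_card, hcard2] at h
  have h2 : A.card * (A.card + 1) = 2 * S₁.card := by
    rw [Nat.mul_add, Nat.mul_one]; linarith
  rw [h2, Nat.mul_div_cancel_left _ (by norm_num)]

/-- the core argument, assuming `x₁ < x₂`. -/
lemma key_lemma (n : ℕ) (A : Finset ℝ) (hpos : ∀ x ∈ A, 0 < x)
    (a d : ℝ) (hd : 0 < d)
    (hAP : ↑A ⊆ (fun i : ℕ => a + i * d) '' {i | i ≤ 2 * n - 4})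
    (x₁ y₁ x₂ y₂ : ℝ) (hx₁ : x₁ ∈ A) (hy₁ : y₁ ∈ A) (hx₂ : x₂ ∈ A) (hy₂ : y₂ ∈ A)
    (h₂ : x₂ ≤ y₂) (heq : x₁ * y₁ = x₂ * y₂) (hlt : x₁ < x₂) :
    ∃ i k l j : ℕ, i < k ∧ k ≤ l ∧ l < j ∧ j ≤ 2 * n - 4 ∧
      a / d = ((i : ℝ) * j - k * l) / ((k : ℝ) + l - i - j) := by
  have hx₁p := hpos _ hx₁
  have hy₂p := hpos _ hy₂
  have hy2lt : y₂ < y₁ := by nlinarith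
  obtain ⟨i, hi, hix⟩ := hAP hx₁
  obtain ⟨j, hj, hjy⟩ := hAP hy₁
  obtain ⟨k, hk, hkx⟩ := hAP hx₂
  obtain ⟨l, hl, hly⟩ := hAP hy₂
  simp only [Set.mem_setOf_eq] at hi hj hk hl
  have hix' : a + (i : ℝ) * d = x₁ := hix
  have hjy' : a + (j : ℝ) * d = y₁ := hjy
  have hkx' : a + (k : ℝ) * d = x₂ := hkx
  have hly' : a + (l : ℝ) * d = y₂ := hly
  subst hix' hjy' hkx' hly'
  have hik : i < k := by
    have h' : (i : ℝ) < k := (mul_lt_mul_iff_of_pos_right hd).1 (by linarith)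
    exact_mod_cast h'
  have hkl : k ≤ l := by
    have h' : (k : ℝ) ≤ l := (mul_le_mul_iff_of_pos_right hd).1 (by linarith)
    exact_mod_cast h'
  have hlj : l < j := by
    have h' : (l : ℝ) < j := (mul_lt_mul_iff_of_pos_right hd).1 (by linarith)
    exact_mod_cast h'
  have hikR : (i : ℝ) < k := by exact_mod_cast hik
  have hklR : (k : ℝ) ≤ l := by exact_mod_cast hkl
  have h1' : a * ((i : ℝ) + j - k - l) + d * ((i : ℝ) * j - k * l) = 0 := by
    have h1 : d * (a * ((i : ℝ) + j - k - l) + d * ((i : ℝ) * j - k * l)) = 0 := by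
      linear_combination heq
    exact (mul_eq_zero.1 h1).resolve_left hd.ne'
  have hs : (k : ℝ) + l - i - j ≠ 0 := by
    intro hs0
    have ha : ((i : ℝ) + j - k - l) = 0 := by linarith
    rw [ha, mul_zero, zero_add] at h1'
    have hij : (i : ℝ) * j - k * l = 0 := (mul_eq_zero.1 h1').resolve_left hd.ne'
    have hjR : (j : ℝ) = k + l - i := by linarith
    have hfac : (k : ℝ) * l - i * j = (k - i) * (l - i) := by rw [hjR]; ring
    have hpos' : (0 : ℝ) < (k - i) * (l - i) :=
      mul_pos (sub_pos.2 hikR) (sub_pos.2 (lt_of_lt_of_le hikR hklR))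
    linarith
  refine ⟨i, k, l, j, hik, hkl, hlj, hj, ?_⟩
  rw [div_eq_div_iff hd.ne' hs]
  linear_combination -h1'

theorem stmt_12 (n : ℕ) (hn : 3 ≤ n) (A : Finset ℝ) (hA : A.card = n)
    (hpos : ∀ x ∈ A, 0 < x)
    (hsum : (A + A).card ≤ 3 * n - 4) (hprod : (A * A).card < n * (n + 1) / 2)
    (a d : ℝ) (hd : 0 < d)
    (hAP : ↑A ⊆ (fun i : ℕ => a + i * d) '' {i | i ≤ 2 * n - 4}) :
    ∃ i k l j : ℕ, i < k ∧ k ≤ l ∧ l < j ∧ j ≤ 2 * n - 4 ∧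
      a / d = ((i : ℝ) * j - k * l) / ((k : ℝ) + l - i - j) := by
  set S := (A ×ˢ A).filter fun p => p.1 ≤ p.2 with hS
  have hScard : S.card = n * (n + 1) / 2 := by rw [hS, card_le_pairs, hA]
  have hmaps : ∀ p ∈ S, p.1 * p.2 ∈ A * A := by
    rintro ⟨x, y⟩ hp
    rw [hS, Finset.mem_filter, Finset.mem_product] at hp
    exact Finset.mul_mem_mul hp.1.1 hp.1.2
  have hlt : (A * A).card < S.card := by rw [hScard]; exact hprod
  obtain ⟨p, hp, q, hq, hne, heq⟩ :=
    Finset.exists_ne_map_eq_of_card_lt_of_maps_to hlt hmaps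
  obtain ⟨x₁, y₁⟩ := p
  obtain ⟨x₂, y₂⟩ := q
  rw [hS, Finset.mem_filter, Finset.mem_product] at hp hq
  obtain ⟨⟨hx₁, hy₁⟩, h₁⟩ := hp
  obtain ⟨⟨hx₂, hy₂⟩, h₂⟩ := hq
  simp only at heq
  have hxne : x₁ ≠ x₂ := by
    intro h
    subst h
    have : y₁ = y₂ := mul_left_cancel₀ (hpos _ hx₁).ne' heq
    exact hne (by rw [this])
  rcases lt_or_gt_of_ne hxne with h | h
  · exact key_lemma n A hpos a d hd hAP x₁ y₁ x₂ y₂ hx₁ hy₁ hx₂ hy₂ h₂ heq h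
  · exact key_lemma n A hpos a d hd hAP x₂ y₂ x₁ y₁ hx₂ hy₂ hx₁ hy₁ h₁ heq.symm h
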